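/- Assume Assumption (†). Let V be a weakly saturated subvariety of ℙ^m over F, and let W₁, …, W_k ⊂ V be pairwise distinct irreducible locally closed strongly saturated subvarieties with dim W_i < dim V for all i, such that no W_i is contained in the Zariski closure of W_j for i ≠ j, and such that θ_i := lim_{B→∞} N(W_i,B)/N(V,B) satisfies 0 < θ_i < 1 for all i. Then lim_{B→∞} N(W_{i₁} ∩ ⋯ ∩ W_{i_l}, B)/N(V,B) = 0 for all pairwise distinct indices i₁, …, i_l with l ≥ 2, and consequently Σ_{i=1}^k θ_i = lim_{B→∞} N(W₁ ∪ ⋯ ∪ W_k, B)/N(V,B) < 1. -/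

import Mathlib

open Filter Topology

namespace ProjSat

/-- The set of `F`-rational points of projective `m`-space, modelled as the
projectivization of `F^(m+1)`. -/
abbrev Pt (F : Type) [Field F] (m : ℕ) := Projectivization F (Fin (m + 1) → F)

variable (F : Type) [Field F] (m : ℕ)

/-- A polynomial `p` vanishes at a point `x ∈ ℙ^m(F)` if it vanishes on every
vector representing `x`. -/
def Vanishes (p : MvPolynomial (Fin (m + 1)) F) (x : Pt F m) : Prop :=
  ∀ (v : Fin (m + 1) → F) (hv : v ≠ 0),
    Projectivization.mk F v hv = x → MvPolynomial.eval v p = 0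

/-- The Zariski topology on `ℙ^m(F)`: it is generated by the complements of the
zero loci of homogeneous polynomials. -/
instance zariskiTopology : TopologicalSpace (Pt F m) :=
  TopologicalSpace.generateFrom
    { U | ∃ (p : MvPolynomial (Fin (m + 1)) F) (d : ℕ),
        p.IsHomogeneous d ∧ U = { x | ¬ Vanishes F m p x } }

variable {F m}

/-- The dimension of a subvariety: the topological Krull dimension of the subspace. -/
noncomputable def dimv (V : Set (Pt F m)) : WithBot ℕ∞ :=
  topologicalKrullDim V

variable (H : Pt F m → ℝ)

/-- The height counting function `N(V, B) = #{x ∈ V(F) : H(x) ≤ B}`. -/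
noncomputable def Ncount (V : Set (Pt F m)) (B : ℝ) : ℕ :=
  {x ∈ V | H x ≤ B}.ncard

/-- The counting ratio `B ↦ N(V', B) / N(V, B)`. -/
noncomputable def ratio (V' V : Set (Pt F m)) : ℝ → ℝ :=
  fun B => (Ncount H V' B : ℝ) / (Ncount H V B : ℝ)

/-- Assumption (†): for all locally closed subvarieties `V' ⊆ V` of `ℙ^m` over `F`
with `V(F)` infinite, the limit `lim_{B→∞} N(V',B)/N(V,B)` exists. -/
def Dagger : Prop :=
  ∀ V' V : Set (Pt F m), IsLocallyClosed V' → IsLocallyClosed V → V' ⊆ V →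
    V.Infinite → ∃ L : ℝ, Tendsto (ratio H V' V) atTop (𝓝 L)

/-- `U` is a dense Zariski open subset of `V`. -/
def IsDenseOpenIn (U V : Set (Pt F m)) : Prop :=
  (∃ O : Set (Pt F m), IsOpen O ∧ U = V ∩ O) ∧ V ⊆ closure U

/-- `V` is weakly saturated: `V` is irreducible, `V(F)` is infinite, and for every
locally closed subvariety `W ⊆ V` with `dim W < dim V` one has
`lim_{B→∞} N(W,B)/N(V,B) < 1`. -/
def WeaklySaturated (V : Set (Pt F m)) : Prop :=
  IsIrreducible V ∧ V.Infinite ∧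
    ∀ W : Set (Pt F m), IsLocallyClosed W → W ⊆ V → dimv W < dimv V →
      ∃ L : ℝ, Tendsto (ratio H W V) atTop (𝓝 L) ∧ L < 1

/-- `V` is strongly saturated: `V` is irreducible, `V(F)` is infinite, and for every
dense Zariski open subset `U ⊆ V` one has `lim_{B→∞} N(U,B)/N(V,B) = 1`. -/
def StronglySaturated (V : Set (Pt F m)) : Prop :=
  IsIrreducible V ∧ V.Infinite ∧
    ∀ U : Set (Pt F m), IsDenseOpenIn U V →
      Tendsto (ratio H U V) atTop (𝓝 1)

end ProjSat



namespace TDS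

open ProjSat Set

variable {F : Type} [Field F] {m : ℕ}
variable (H : Pt F m → ℝ)

section counting

variable (hN : ∀ B : ℝ, {x : Pt F m | H x ≤ B}.Finite)
include hN

lemma count_finite (S : Set (Pt F m)) (B : ℝ) : {x ∈ S | H x ≤ B}.Finite :=
  (hN B).subset (fun _ hx => hx.2)

lemma Ncount_mono {S T : Set (Pt F m)} (h : S ⊆ T) (B : ℝ) :
    Ncount H S B ≤ Ncount H T B :=
  Set.ncard_le_ncard (fun x hx => ⟨h hx.1, hx.2⟩) (count_finite H hN T B)

omit hN in
lemma ratio_nonneg (S T : Set (Pt F m)) (B : ℝ) : 0 ≤ ratio H S T B :=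
  div_nonneg (Nat.cast_nonneg _) (Nat.cast_nonneg _)

lemma ratio_mono {S T : Set (Pt F m)} (h : S ⊆ T) (V : Set (Pt F m)) (B : ℝ) :
    ratio H S V B ≤ ratio H T V B := by
  unfold ratio
  rcases eq_or_ne ((Ncount H V B : ℝ)) 0 with h0 | h0
  · simp [h0]
  · have hpos : (0:ℝ) < (Ncount H V B : ℝ) :=
      lt_of_le_of_ne (Nat.cast_nonneg _) (Ne.symm h0)
    exact (div_le_div_iff_of_pos_right hpos).2 (by exact_mod_cast Ncount_mono H hN h B)

omit hN in
lemma Ncount_empty (B : ℝ) : Ncount H (∅ : Set (Pt F m)) B = 0 := by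
  unfold Ncount; simp

omit hN in
lemma ratio_empty (V : Set (Pt F m)) (B : ℝ) : ratio H (∅ : Set (Pt F m)) V B = 0 := by
  unfold ratio; rw [Ncount_empty]; simp

/-- key multiplicativity : for `A ⊆ W`, `N(A)/N(V) = (N(A)/N(W)) * (N(W)/N(V))`. -/
lemma ratio_mul {A W : Set (Pt F m)} (hAW : A ⊆ W) (V : Set (Pt F m)) (B : ℝ) :
    ratio H A V B = ratio H A W B * ratio H W V B := by
  unfold ratio
  rcases eq_or_ne (Ncount H W B) 0 with h0 | h0
  · have hA : Ncount H A B = 0 := by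
      have := Ncount_mono H hN hAW B
      omega
    simp [hA, h0]
  · rw [div_mul_div_comm, mul_comm ((Ncount H W B : ℝ)) _, mul_div_mul_right]
    exact_mod_cast h0

lemma Ncount_union_add_inter (A A' : Set (Pt F m)) (B : ℝ) :
    Ncount H (A ∪ A') B + Ncount H (A ∩ A') B = Ncount H A B + Ncount H A' B := by
  unfold Ncount
  have h1 : {x ∈ A ∪ A' | H x ≤ B} = {x ∈ A | H x ≤ B} ∪ {x ∈ A' | H x ≤ B} := by
    ext x; simp [and_or_right]
  have h2 : {x ∈ A ∩ A' | H x ≤ B} = {x ∈ A | H x ≤ B} ∩ {x ∈ A' | H x ≤ B} := by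
    ext x; constructor
    · rintro ⟨⟨h1, h2⟩, h3⟩; exact ⟨⟨h1, h3⟩, ⟨h2, h3⟩⟩
    · rintro ⟨⟨h1, h3⟩, ⟨h2, _⟩⟩; exact ⟨⟨h1, h2⟩, h3⟩
  rw [h1, h2]
  exact Set.ncard_union_add_ncard_inter _ _ (count_finite H hN A B) (count_finite H hN A' B)

lemma ratio_union (A A' V : Set (Pt F m)) (B : ℝ) :
    ratio H (A ∪ A') V B = ratio H A V B + ratio H A' V B - ratio H (A ∩ A') V B := by
  unfold ratio
  have := Ncount_union_add_inter H hN A A' B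
  have hr : (Ncount H (A ∪ A') B : ℝ) = (Ncount H A B : ℝ) + (Ncount H A' B : ℝ) - (Ncount H (A ∩ A') B : ℝ) := by
    have h2 : ((Ncount H (A ∪ A') B + Ncount H (A ∩ A') B : ℕ) : ℝ)
        = ((Ncount H A B + Ncount H A' B : ℕ) : ℝ) := by exact_mod_cast this
    push_cast at h2
    linarith
  rw [hr, sub_div, add_div]

lemma ratio_diff {U W : Set (Pt F m)} (hUW : U ⊆ W) (V : Set (Pt F m)) (B : ℝ) :
    ratio H (W \ U) V B = ratio H W V B - ratio H U V B := by
  have hu : U ∪ (W \ U) = W := Set.union_diff_cancel hUW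
  have hd : U ∩ (W \ U) = ∅ := by
    ext x; simp +contextual [Set.mem_diff]
  have := ratio_union H hN U (W \ U) V B
  rw [hu, hd, ratio_empty] at this
  linarith

end counting

end TDS

namespace TDS2

open ProjSat Set TDS

variable {F : Type} [Field F] {m : ℕ}
variable {H : Pt F m → ℝ}
variable (hN : ∀ B : ℝ, {x : Pt F m | H x ≤ B}.Finite)
variable {V : Set (Pt F m)} {k : ℕ} {W : Fin k → Set (Pt F m)}
variable (hWsub : ∀ i, W i ⊆ V)
variable (hWirr : ∀ i, IsIrreducible (W i))
variable (hWss : ∀ i, StronglySaturated H (W i))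
variable (hnotcontained : ∀ i j, i ≠ j → ¬ (W i ⊆ closure (W j)))
variable {θ : Fin k → ℝ}
variable (hθ : ∀ i, Filter.Tendsto (ratio H (W i) V) Filter.atTop (𝓝 (θ i)))

include hN hWirr hWss hnotcontained hθ in
lemma pair_zero {i j : Fin k} (hij : i ≠ j) :
    Filter.Tendsto (ratio H (W i ∩ W j) V) Filter.atTop (𝓝 0) := by
  set U : Set (Pt F m) := W i \ closure (W j) with hU
  have hUopen : U = W i ∩ (closure (W j))ᶜ := Set.diff_eq _ _
  have hUne : U.Nonempty := by
    rcases Set.not_subset.1 (hnotcontained i j hij) with ⟨x, hx1, hx2⟩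
    exact ⟨x, hx1, hx2⟩
  have hdense : W i ⊆ closure U := by
    intro x hx
    by_contra hxc
    obtain ⟨z, hzW, hz1, hz2⟩ := (hWirr i).2 (closure U)ᶜ (closure (W j))ᶜ
      isClosed_closure.isOpen_compl isClosed_closure.isOpen_compl
      ⟨x, hx, hxc⟩ ⟨hUne.choose, hUne.choose_spec.1, hUne.choose_spec.2⟩
    exact hz1 (subset_closure ⟨hzW, hz2⟩)
  have hDO : IsDenseOpenIn U (W i) :=
    ⟨⟨(closure (W j))ᶜ, isClosed_closure.isOpen_compl, hUopen⟩, hdense⟩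
  have h1 : Filter.Tendsto (ratio H U (W i)) Filter.atTop (𝓝 1) := (hWss i).2.2 U hDO
  have hUV : Filter.Tendsto (ratio H U V) Filter.atTop (𝓝 (θ i)) := by
    have heq : ∀ B, ratio H U V B = ratio H U (W i) B * ratio H (W i) V B :=
      fun B => ratio_mul H hN Set.diff_subset V B
    have := h1.mul (hθ i)
    rw [one_mul] at this
    exact this.congr (fun B => (heq B).symm)
  have hWU : Filter.Tendsto (ratio H (W i \ U) V) Filter.atTop (𝓝 0) := by
    have heq : ∀ B, ratio H (W i \ U) V B = ratio H (W i) V B - ratio H U V B := by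
      intro B
      have hd : W i \ U = W i \ (W i \ closure (W j)) := rfl
      exact ratio_diff H hN Set.diff_subset V B
    have := (hθ i).sub hUV
    rw [sub_self] at this
    exact this.congr (fun B => (heq B).symm)
  apply tendsto_of_tendsto_of_tendsto_of_le_of_le tendsto_const_nhds hWU
    (fun B => ratio_nonneg H _ _ B)
  · intro B
    apply ratio_mono H hN ?_ V B
    intro x hx
    exact ⟨hx.1, fun hxU => hxU.2 (subset_closure hx.2)⟩

include hN in
lemma ratio_biUnion_le (f : Fin k → Set (Pt F m)) (s : Finset (Fin k)) (B : ℝ) :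
    ratio H (⋃ i ∈ s, f i) V B ≤ ∑ i ∈ s, ratio H (f i) V B := by
  classical
  induction s using Finset.induction_on with
  | empty => simp [ratio_empty]
  | insert a s hnotmem ih =>
    rw [Finset.set_biUnion_insert, Finset.sum_insert hnotmem]
    calc ratio H (f a ∪ ⋃ i ∈ s, f i) V B
        ≤ ratio H (f a) V B + ratio H (⋃ i ∈ s, f i) V B := by
          have h := ratio_union H hN (f a) (⋃ i ∈ s, f i) V B
          have h2 := ratio_nonneg H (f a ∩ ⋃ i ∈ s, f i) V B
          linarith
      _ ≤ _ := by linarith [ih]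

include hN hWirr hWss hnotcontained hθ in
lemma union_sum (s : Finset (Fin k)) :
    Filter.Tendsto (ratio H (⋃ i ∈ s, W i) V) Filter.atTop (𝓝 (∑ i ∈ s, θ i)) := by
  classical
  induction s using Finset.induction_on with
  | empty =>
    rw [show (⋃ i ∈ (∅:Finset (Fin k)), W i) = (∅ : Set (Pt F m)) by simp, Finset.sum_empty]
    exact (tendsto_const_nhds : Filter.Tendsto (fun _ : ℝ => (0:ℝ)) _ _).congr
      (fun B => (ratio_empty H V B).symm)
  | insert a s hnotmem ih =>
    rw [Finset.sum_insert hnotmem]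
    have hint : Filter.Tendsto (ratio H (W a ∩ ⋃ i ∈ s, W i) V) Filter.atTop (𝓝 0) := by
      have hsub : ∀ B, ratio H (W a ∩ ⋃ i ∈ s, W i) V B ≤ ∑ i ∈ s, ratio H (W a ∩ W i) V B := by
        intro B
        have : W a ∩ ⋃ i ∈ s, W i = ⋃ i ∈ s, (W a ∩ W i) := by
          rw [Set.inter_iUnion₂]
        rw [this]
        exact ratio_biUnion_le hN _ s B
      have hsum : Filter.Tendsto (fun B => ∑ i ∈ s, ratio H (W a ∩ W i) V B)
          Filter.atTop (𝓝 0) := by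
        have : Filter.Tendsto (fun B => ∑ i ∈ s, ratio H (W a ∩ W i) V B)
            Filter.atTop (𝓝 (∑ i ∈ s, (0:ℝ))) := by
          apply tendsto_finset_sum
          intro i hi
          have hai : a ≠ i := fun h => hnotmem (h ▸ hi)
          exact pair_zero hN hWirr hWss hnotcontained hθ hai
        simpa using this
      exact tendsto_of_tendsto_of_tendsto_of_le_of_le tendsto_const_nhds hsum
        (fun B => ratio_nonneg H _ _ B) hsub
    have heq : ∀ B, ratio H (⋃ i ∈ insert a s, W i) V B
        = ratio H (W a) V B + ratio H (⋃ i ∈ s, W i) V B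
          - ratio H (W a ∩ ⋃ i ∈ s, W i) V B := by
      intro B
      rw [Finset.set_biUnion_insert]
      exact ratio_union H hN _ _ V B
    have := ((hθ a).add ih).sub hint
    rw [sub_zero] at this
    exact this.congr (fun B => (heq B).symm)

end TDS2


namespace TDSAlg

open MvPolynomial

variable {F : Type} [Field F]

section nest

variable {R : Type*} [CommRing R]

/-- nested expression `x^k * (inner + a*x)` used in the Coquand–Lombardi style collapse. -/
def nest (c : R) : List (R × ℕ × R) → R
  | [] => c
  | (x, k, a) :: t => x ^ k * (nest c t + a * x)

lemma nest_mem_chain (c : R) :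
    ∀ (l : List (R × ℕ × R)) (Ps : ℕ → Ideal R)
      (hp : ∀ n, (Ps n).IsPrime) (hm : ∀ n, Ps n ≤ Ps (n + 1))
      (hx : ∀ (i : ℕ) (h : i < l.length),
        (l.get ⟨i, h⟩).1 ∈ Ps (i + 1) ∧ (l.get ⟨i, h⟩).1 ∉ Ps i),
      nest c l ∈ Ps 0 → c ∈ Ps l.length := by
  intro l
  induction l with
  | nil => intro Ps _ _ _ h; exact h
  | cons hd t ih =>
    intro Ps hp hm hx hmem
    obtain ⟨x, k, a⟩ := hd
    have hx0 := hx 0 (by simp)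
    simp only [List.get] at hx0
    have h1 : nest c t + a * x ∈ Ps 0 := by
      rcases (hp 0).mem_or_mem hmem with h | h
      · exact absurd ((hp 0).mem_of_pow_mem k h) hx0.2
      · exact h
    have h2 : nest c t ∈ Ps 1 := by
      have hax : a * x ∈ Ps 1 := (Ps 1).mul_mem_left a hx0.1
      have := (Ps 1).sub_mem (hm 0 h1) hax
      simpa using this
    have := ih (fun n => Ps (n + 1)) (fun n => hp _) (fun n => hm _)
      (fun i h => (hx (i + 1) (by simpa using Nat.succ_lt_succ h))) h2
    simpa [List.length_cons] using this

end nest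

section nestRepr

variable {R : Type*} [CommRing R] [Algebra F R]

lemma poly_trail_decomp {S : Type*} [CommRing S] (P : Polynomial S) (hP : P ≠ 0) :
    ∃ (k : ℕ) (q : S) (T : Polynomial S), q ≠ 0 ∧
      P = Polynomial.X ^ k * (Polynomial.C q + Polynomial.X * T) := by
  suffices h : ∀ (n : ℕ) (P : Polynomial S), P ≠ 0 → P.natDegree ≤ n → ∃ (k : ℕ) (q : S)
      (T : Polynomial S), q ≠ 0 ∧ P = Polynomial.X ^ k * (Polynomial.C q + Polynomial.X * T) by
    exact h P.natDegree P hP le_rfl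
  intro n
  induction n with
  | zero =>
    intro P hP hdeg
    have h0 : P.coeff 0 ≠ 0 := by
      intro h0
      have := Polynomial.eq_C_of_natDegree_eq_zero (Nat.le_zero.1 hdeg)
      rw [this, h0, map_zero] at hP
      exact hP rfl
    refine ⟨0, P.coeff 0, P.divX, h0, ?_⟩
    rw [pow_zero, one_mul]
    conv_lhs => rw [← Polynomial.X_mul_divX_add P]
    ring
  | succ n ih =>
    intro P hP hdeg
    by_cases h0 : P.coeff 0 = 0
    · have hd : P = Polynomial.X * P.divX := by
        conv_lhs => rw [← Polynomial.X_mul_divX_add P]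
        rw [h0, map_zero, add_zero]
      have hdx : P.divX ≠ 0 := by
        intro h; rw [h, mul_zero] at hd; exact hP hd
      have hlt : P.divX.natDegree ≤ n := by
        rw [Polynomial.natDegree_divX_eq_natDegree_tsub_one]
        omega
      obtain ⟨k, q, T, hq, hdec⟩ := ih P.divX hdx hlt
      exact ⟨k + 1, q, T, hq, by rw [hd, hdec]; ring⟩
    · refine ⟨0, P.coeff 0, P.divX, h0, ?_⟩
      rw [pow_zero, one_mul]
      conv_lhs => rw [← Polynomial.X_mul_divX_add P]
      ring

/-- The evaluation of `finSuccEquiv` matches `aeval`. -/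
lemma aeval_finSuccEquiv {L : ℕ} (x : Fin (L + 1) → R) (Q : MvPolynomial (Fin (L + 1)) F) :
    Polynomial.eval₂ ((MvPolynomial.aeval (fun i => x i.succ) :
        MvPolynomial (Fin L) F →ₐ[F] R) : MvPolynomial (Fin L) F →+* R) (x 0)
      (MvPolynomial.finSuccEquiv F L Q) = MvPolynomial.aeval x Q := by
  have : (Polynomial.eval₂RingHom ((MvPolynomial.aeval (fun i => x i.succ) :
        MvPolynomial (Fin L) F →ₐ[F] R) : MvPolynomial (Fin L) F →+* R) (x 0)).comp
        (MvPolynomial.finSuccEquiv F L).toAlgHom.toRingHom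
      = ((MvPolynomial.aeval x : MvPolynomial (Fin (L+1)) F →ₐ[F] R) :
          MvPolynomial (Fin (L+1)) F →+* R) := by
    apply MvPolynomial.ringHom_ext
    · intro r
      simp [MvPolynomial.finSuccEquiv_apply, MvPolynomial.eval₂Hom_C]
    · intro i
      refine Fin.cases ?_ ?_ i
      · simp [MvPolynomial.finSuccEquiv_X_zero]
      · intro j
        simp [MvPolynomial.finSuccEquiv_X_succ]
  have h2 := congrArg (fun f => f Q) this
  simpa using h2

lemma exists_nest_repr :
    ∀ (L : ℕ) (Q : MvPolynomial (Fin L) F), Q ≠ 0 → ∀ (x : Fin L → R),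
    ∃ (l : List (R × ℕ × R)) (c : F), c ≠ 0 ∧
      l.map Prod.fst = List.ofFn x ∧
      MvPolynomial.aeval x Q = nest (algebraMap F R c) l := by
  intro L
  induction L with
  | zero =>
    intro Q hQ x
    refine ⟨[], Q.coeff 0, ?_, by simp, ?_⟩
    · intro h
      rw [MvPolynomial.eq_C_of_isEmpty Q, h, map_zero] at hQ
      exact hQ rfl
    · rw [MvPolynomial.eq_C_of_isEmpty Q]
      simp [nest]
  | succ L ihL =>
    intro Q hQ x
    have hP' : MvPolynomial.finSuccEquiv F L Q ≠ 0 := by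
      intro h
      exact hQ ((map_eq_zero_iff _ (AlgEquiv.injective _)).1 h)
    obtain ⟨k, q, T, hq, hdec⟩ := poly_trail_decomp _ hP'
    obtain ⟨l', c, hc, hmap, hrepr⟩ := ihL q hq (fun i => x i.succ)
    refine ⟨(x 0, k, Polynomial.eval₂ ((MvPolynomial.aeval (fun i => x i.succ) :
        MvPolynomial (Fin L) F →ₐ[F] R) : MvPolynomial (Fin L) F →+* R) (x 0) T) :: l',
      c, hc, ?_, ?_⟩
    · rw [List.ofFn_succ]
      simp only [List.map_cons, hmap]
    · rw [← aeval_finSuccEquiv x Q, hdec]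
      simp only [nest]
      rw [Polynomial.eval₂_mul, Polynomial.eval₂_X_pow, Polynomial.eval₂_add,
        Polynomial.eval₂_C, Polynomial.eval₂_mul, Polynomial.eval₂_X]
      simp only [RingHom.coe_coe]
      rw [hrepr]
      ring

end nestRepr

end TDSAlg

namespace TDSAlg

variable {F : Type} [Field F]

section counting

open MvPolynomial

variable (F) in
/-- Box of exponent multi-indices with all entries `< D`. -/
noncomputable def boxF (n D : ℕ) : Finset (Fin n →₀ ℕ) :=
  (Fintype.piFinset fun _ : Fin n => Finset.range D).map
    (Finsupp.equivFunOnFinite.symm.toEmbedding)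

lemma mem_boxF {n D : ℕ} (β : Fin n →₀ ℕ) : β ∈ boxF n D ↔ ∀ i, β i < D := by
  unfold boxF
  constructor
  · rintro h
    rw [Finset.mem_map] at h
    obtain ⟨g, hg, rfl⟩ := h
    intro i
    have := Fintype.mem_piFinset.1 hg i
    simpa using this
  · intro h
    rw [Finset.mem_map]
    refine ⟨Finsupp.equivFunOnFinite β, ?_, by simp⟩
    rw [Fintype.mem_piFinset]
    intro i
    simpa using h i

lemma card_boxF (n D : ℕ) : (boxF n D).card = D ^ n := by
  unfold boxF
  rw [Finset.card_map, Fintype.card_piFinset]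
  simp

lemma coord_le_sum {n : ℕ} (β : Fin n →₀ ℕ) (i : Fin n) : β i ≤ β.sum fun _ e => e := by
  by_cases h : β i = 0
  · simp [h]
  · have hi : i ∈ β.support := Finsupp.mem_support_iff.2 h
    exact Finset.single_le_sum (fun _ _ => Nat.zero_le _) hi

lemma mem_span_box {n D : ℕ} (p : MvPolynomial (Fin n) F) (hp : p.totalDegree < D) :
    p ∈ Submodule.span F
      ((fun β => (MvPolynomial.monomial β (1 : F))) '' (boxF n D : Set (Fin n →₀ ℕ))) := by
  classical
  have hsum : ∑ β ∈ p.support, (MvPolynomial.monomial β) (MvPolynomial.coeff β p) ∈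
      Submodule.span F
      ((fun β => (MvPolynomial.monomial β (1 : F))) '' (boxF n D : Set (Fin n →₀ ℕ))) := by
    apply Submodule.sum_mem
    intro β hβ
    have h1 : (MvPolynomial.monomial β) (MvPolynomial.coeff β p)
        = (MvPolynomial.coeff β p) • (MvPolynomial.monomial β (1 : F)) := by
      rw [MvPolynomial.smul_monomial, smul_eq_mul, mul_one]
    rw [h1]
    apply Submodule.smul_mem
    apply Submodule.subset_span
    refine ⟨β, ?_, rfl⟩
    rw [Finset.mem_coe, mem_boxF]
    intro i
    calc β i ≤ β.sum fun _ e => e := coord_le_sum β i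
      _ ≤ p.totalDegree := MvPolynomial.le_totalDegree hβ
      _ < D := hp
  rwa [MvPolynomial.support_sum_monomial_coeff p] at hsum

lemma not_algIndep (N : ℕ) (x : Fin (N + 1) → MvPolynomial (Fin N) F) :
    ¬ AlgebraicIndependent F x := by
  intro hind
  classical
  set d := (Finset.univ.sup fun i => (x i).totalDegree) + 1 with hd
  set c := (N + 1) * d + 1 with hc
  set M := c ^ N + 1 with hM
  set D := (N + 1) * (M - 1) * d with hD
  -- the monomial family ∏ xᵢ^{αᵢ} for α in the box
  have hdeg : ∀ α ∈ boxF (N+1) M,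
      (MvPolynomial.aeval x (MvPolynomial.monomial α (1:F))).totalDegree < D + 1 := by
    intro α hα
    rw [MvPolynomial.aeval_monomial, map_one, one_mul]
    have h1 : (α.prod fun i k => x i ^ k).totalDegree
        ≤ ∑ i ∈ α.support, (x i ^ α i).totalDegree := MvPolynomial.totalDegree_finset_prod _ _
    have h2 : ∑ i ∈ α.support, (x i ^ α i).totalDegree ≤ D := by
      calc ∑ i ∈ α.support, (x i ^ α i).totalDegree
          ≤ ∑ _i ∈ α.support, (M - 1) * d := by
            apply Finset.sum_le_sum
            intro i _
            calc (x i ^ α i).totalDegree ≤ α i * (x i).totalDegree :=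
                  MvPolynomial.totalDegree_pow _ _
              _ ≤ (M - 1) * d := by
                  apply Nat.mul_le_mul
                  · have := (mem_boxF α).1 hα i
                    omega
                  · have : (x i).totalDegree ≤ Finset.univ.sup fun i => (x i).totalDegree :=
                      Finset.le_sup (f := fun i => (x i).totalDegree) (Finset.mem_univ i)
                    omega
        _ = α.support.card * ((M - 1) * d) := by
            rw [Finset.sum_const, smul_eq_mul]
        _ ≤ (N + 1) * ((M - 1) * d) := by
            apply Nat.mul_le_mul_right
            calc α.support.card ≤ Fintype.card (Fin (N+1)) := Finset.card_le_univ _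
              _ = N + 1 := by simp
        _ = D := by rw [hD, Nat.mul_assoc]
    omega
  -- linear independence of that family
  have hli0 : LinearIndependent F
      (fun α : {α // α ∈ boxF (N+1) M} => MvPolynomial.monomial (α : Fin (N+1) →₀ ℕ) (1:F)) := by
    have hb := (MvPolynomial.basisMonomials (Fin (N+1)) F).linearIndependent
    have := hb.comp (Subtype.val : {α // α ∈ boxF (N+1) M} → (Fin (N+1) →₀ ℕ))
      Subtype.val_injective
    simp only [MvPolynomial.coe_basisMonomials] at this
    exact this
  have hli : LinearIndependent F
      (fun α : {α // α ∈ boxF (N+1) M} =>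
        MvPolynomial.aeval x (MvPolynomial.monomial (α : Fin (N+1) →₀ ℕ) (1:F))) := by
    have := hli0.map' (MvPolynomial.aeval x).toLinearMap (LinearMap.ker_eq_bot.2 hind)
    exact this
  -- the span they live in
  set s : Finset (MvPolynomial (Fin N) F) :=
    (boxF N (D+1)).image fun β => MvPolynomial.monomial β (1:F) with hs
  set Wsp : Submodule F (MvPolynomial (Fin N) F) := Submodule.span F (s : Set _) with hW
  have hmem : ∀ α : {α // α ∈ boxF (N+1) M},
      MvPolynomial.aeval x (MvPolynomial.monomial (α : Fin (N+1) →₀ ℕ) (1:F)) ∈ Wsp := by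
    intro α
    rw [hW, hs, Finset.coe_image]
    exact mem_span_box _ (hdeg _ α.2)
  haveI : Module.Finite F Wsp := by
    rw [hW]
    exact Module.Finite.span_of_finite F (s.finite_toSet)
  have hcard : Fintype.card {α // α ∈ boxF (N+1) M} ≤ Module.finrank F Wsp := by
    have hui : LinearIndependent F (fun α : {α // α ∈ boxF (N+1) M} =>
        (⟨_, hmem α⟩ : Wsp)) := by
      apply LinearIndependent.of_comp Wsp.subtype
      exact hli
    exact hui.fintype_card_le_finrank
  have hfr : Module.finrank F Wsp ≤ (D + 1) ^ N := by
    calc Module.finrank F Wsp ≤ s.card := by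
          rw [hW]
          exact finrank_span_finset_le_card s
      _ ≤ (boxF N (D+1)).card := Finset.card_image_le
      _ = (D + 1) ^ N := card_boxF _ _
  rw [Fintype.card_coe, card_boxF] at hcard
  -- numerics : M^(N+1) ≤ (D+1)^N is impossible
  have hnum : (D + 1) ^ N < M ^ (N + 1) := by
    have h1 : D + 1 ≤ c * M := by
      rw [hD, hc]
      have hM1 : 1 ≤ M := by omega
      calc (N + 1) * (M - 1) * d + 1 ≤ (N + 1) * M * d + M := by
            have : (N + 1) * (M - 1) * d ≤ (N + 1) * M * d := by
              apply Nat.mul_le_mul_right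
              apply Nat.mul_le_mul_left
              omega
            omega
        _ = ((N + 1) * d + 1) * M := by ring
    calc (D + 1) ^ N ≤ (c * M) ^ N := Nat.pow_le_pow_left h1 N
      _ = c ^ N * M ^ N := by rw [mul_pow]
      _ < M * M ^ N := by
          have hpos : 0 < M ^ N := Nat.pow_pos (by omega)
          exact (Nat.mul_lt_mul_right hpos).2 (by omega)
      _ = M ^ (N + 1) := by ring
  omega

lemma prime_chain_bound {N : ℕ} (P : ℕ → Ideal (MvPolynomial (Fin N) F))
    (hp : ∀ i, i ≤ N + 1 → (P i).IsPrime) (hlt : ∀ i, i < N + 1 → P i < P (i + 1)) :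
    False := by
  classical
  -- pick elements separating consecutive primes
  have hex : ∀ i : Fin (N + 1), ∃ y, y ∈ P (i + 1 : ℕ) ∧ y ∉ P (i : ℕ) := by
    intro i
    obtain ⟨y, hy1, hy2⟩ := SetLike.exists_of_lt (hlt i i.2)
    exact ⟨y, hy1, hy2⟩
  choose x hx1 hx2 using hex
  -- algebraic dependence
  obtain ⟨a, b, hab, hne⟩ := Function.not_injective_iff.1 (not_algIndep N x)
  have hQ : (a - b : MvPolynomial (Fin (N+1)) F) ≠ 0 := sub_ne_zero.2 hne
  have hQ0 : MvPolynomial.aeval x (a - b) = 0 := by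
    rw [map_sub, hab, sub_self]
  obtain ⟨l, c, hc, hmap, hrepr⟩ := exists_nest_repr (N + 1) (a - b) hQ x
  have hlen : l.length = N + 1 := by
    have := congrArg List.length hmap
    simpa using this
  -- the extended chain
  set Ps : ℕ → Ideal (MvPolynomial (Fin N) F) := fun n => P (min n (N + 1)) with hPs
  have hmem : nest (algebraMap F _ c) l ∈ Ps 0 → c ≠ 0 → False := by
    intro h hc0
    have hfin := nest_mem_chain (algebraMap F _ c) l Ps
      (fun n => hp _ (min_le_right _ _))
      (fun n => by
        rcases lt_or_ge n (N + 1) with h | h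
        · have h1 : min n (N + 1) = n := by omega
          have h2 : min (n + 1) (N + 1) = n + 1 := by omega
          rw [hPs]; simp only []
          rw [h1, h2]
          exact (hlt n h).le
        · have h1 : min n (N + 1) = N + 1 := by omega
          have h2 : min (n + 1) (N + 1) = N + 1 := by omega
          rw [hPs]; simp only []
          rw [h1, h2])
      (fun i h => by
        have hiN : i < N + 1 := by omega
        have hgetfst : (l.get ⟨i, h⟩).1 = x ⟨i, hiN⟩ := by
          have h1 : (l.map Prod.fst)[i]'(by simpa using h) = x ⟨i, hiN⟩ := by
            have : ∀ (hh : i < (List.ofFn x).length), (List.ofFn x)[i]'hh = x ⟨i, hiN⟩ := by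
              intro hh
              rw [List.getElem_ofFn]
            rw [List.getElem_of_eq hmap (by simpa using h)]
            exact this _
          rw [List.getElem_map] at h1
          rw [List.get_eq_getElem]
          exact h1
        constructor
        · rw [hgetfst, hPs]
          simp only []
          have : min (i + 1) (N + 1) = i + 1 := by omega
          rw [this]
          exact hx1 ⟨i, hiN⟩
        · rw [hgetfst, hPs]
          simp only []
          have : min i (N + 1) = i := by omega
          rw [this]
          exact hx2 ⟨i, hiN⟩) h
    -- c is a unit, contradiction
    have hunit : IsUnit (algebraMap F (MvPolynomial (Fin N) F) c) :=
      (isUnit_iff_ne_zero.2 hc0).map (algebraMap F (MvPolynomial (Fin N) F))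
    have hne_top := (hp _ (min_le_right l.length (N+1))).ne_top
    exact hne_top (Ideal.eq_top_of_isUnit_mem _ hfin hunit)
  apply hmem _ hc
  rw [← hrepr, hQ0]
  exact (Ps 0).zero_mem

end counting

end TDSAlg


namespace TDSGeo

open ProjSat MvPolynomial

variable {F : Type} [Field F] {m : ℕ}

lemma eval_smul_hom {p : MvPolynomial (Fin (m+1)) F} {d : ℕ} (hp : p.IsHomogeneous d)
    (a : F) (v : Fin (m+1) → F) :
    MvPolynomial.eval (a • v) p = a ^ d * MvPolynomial.eval v p := by
  rw [MvPolynomial.eval_eq', MvPolynomial.eval_eq', Finset.mul_sum]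
  apply Finset.sum_congr rfl
  intro β hβ
  have hdeg : ∑ i, β i = d := by
    have h1 := hp (MvPolynomial.mem_support_iff.1 hβ)
    rw [Finsupp.weight_apply] at h1
    rw [← h1, Finsupp.sum_fintype]
    · apply Finset.sum_congr rfl; intro i _; simp
    · intro i; simp
  calc (MvPolynomial.coeff β p) * ∏ i, (a • v) i ^ β i
      = (MvPolynomial.coeff β p) * ∏ i, (a ^ β i * v i ^ β i) := by
        apply congrArg
        apply Finset.prod_congr rfl
        intro i _
        rw [Pi.smul_apply, smul_eq_mul, mul_pow]
    _ = a ^ d * ((MvPolynomial.coeff β p) * ∏ i, v i ^ β i) := by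
        rw [Finset.prod_mul_distrib, Finset.prod_pow_eq_pow_sum, hdeg]
        ring

lemma mk_smul (v : Fin (m+1) → F) (hv : v ≠ 0) {a : F} (ha : a ≠ 0) :
    Projectivization.mk F (a • v) (smul_ne_zero ha hv) = Projectivization.mk F v hv :=
  (Projectivization.mk_eq_mk_iff F _ _ _ hv).2 ⟨Units.mk0 a ha, rfl⟩

lemma smul_rep_mk (x : Pt F m) {a : F} (ha : a ≠ 0) :
    Projectivization.mk F (a • x.rep) (smul_ne_zero ha x.rep_nonzero) = x := by
  rw [mk_smul x.rep x.rep_nonzero ha, Projectivization.mk_rep]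

lemma exists_unit_rep {x : Pt F m} {v : Fin (m+1) → F} (hv : v ≠ 0)
    (hmk : Projectivization.mk F v hv = x) : ∃ a : Fˣ, v = (a : F) • x.rep := by
  rw [← x.mk_rep, Projectivization.mk_eq_mk_iff] at hmk
  obtain ⟨a, ha⟩ := hmk
  exact ⟨a, by rw [← ha]; rfl⟩

/-- substitute `v·λ` : the restriction of a polynomial to the line spanned by `v`. -/
noncomputable def Phi (v : Fin (m+1) → F) :
    MvPolynomial (Fin (m+1)) F →+* Polynomial F :=
  MvPolynomial.eval₂Hom (Polynomial.C) (fun i => Polynomial.C (v i) * Polynomial.X)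

lemma eval_Phi (v : Fin (m+1) → F) (a : F) (p : MvPolynomial (Fin (m+1)) F) :
    Polynomial.eval a (Phi v p) = MvPolynomial.eval (a • v) p := by
  have h : (Polynomial.evalRingHom a).comp (Phi v)
      = (MvPolynomial.eval (a • v) : MvPolynomial (Fin (m+1)) F →+* F) := by
    apply MvPolynomial.ringHom_ext
    · intro c
      simp only [RingHom.comp_apply, Phi, MvPolynomial.eval₂Hom_C,
        Polynomial.coe_evalRingHom, Polynomial.eval_C, MvPolynomial.eval_C]
    · intro i
      simp only [RingHom.comp_apply, Phi, MvPolynomial.eval₂Hom_X',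
        Polynomial.coe_evalRingHom, Polynomial.eval_mul, Polynomial.eval_C,
        Polynomial.eval_X, MvPolynomial.eval_X, Pi.smul_apply, smul_eq_mul]
      rw [mul_comm]
  exact congrArg (fun f => f p) h

lemma phi_eq_zero_of_scaled_zero [Infinite F] {p : MvPolynomial (Fin (m+1)) F}
    {v : Fin (m+1) → F} (h : ∀ a : F, a ≠ 0 → MvPolynomial.eval (a • v) p = 0) :
    Phi v p = 0 := by
  apply Polynomial.eq_zero_of_infinite_isRoot
  apply Set.Infinite.mono ?_ ((Set.finite_singleton (0:F)).infinite_compl)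
  intro a ha
  simp only [Set.mem_setOf_eq, Polynomial.IsRoot.def]
  rw [eval_Phi]
  exact h a ha

lemma vanishes_of_phi_zero {p : MvPolynomial (Fin (m+1)) F} {x : Pt F m}
    (h : Phi x.rep p = 0) : Vanishes F m p x := by
  intro v hv hmk
  obtain ⟨a, rfl⟩ := exists_unit_rep hv hmk
  rw [← eval_Phi, h, Polynomial.eval_zero]

lemma phi_eq_zero_of_vanishes [Infinite F] {p : MvPolynomial (Fin (m+1)) F} {x : Pt F m}
    (h : Vanishes F m p x) : Phi x.rep p = 0 :=
  phi_eq_zero_of_scaled_zero (fun a ha =>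
    h (a • x.rep) (smul_ne_zero ha x.rep_nonzero) (smul_rep_mk x ha))

lemma vanishes_components [Infinite F] {p : MvPolynomial (Fin (m+1)) F} {x : Pt F m}
    (h : Vanishes F m p x) (dd : ℕ) :
    Vanishes F m (MvPolynomial.homogeneousComponent dd p) x := by
  intro v hv hmk
  set N := p.totalDegree with hN
  set PP : Polynomial F := ∑ d ∈ Finset.range (N+1),
    Polynomial.C (MvPolynomial.eval v (MvPolynomial.homogeneousComponent d p))
      * Polynomial.X ^ d with hPP
  have hexp : ∀ a : F, MvPolynomial.eval (a • v) p = Polynomial.eval a PP := by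
    intro a
    have h2 : MvPolynomial.eval (a • v) p
        = ∑ d ∈ Finset.range (N+1),
            a ^ d * MvPolynomial.eval v (MvPolynomial.homogeneousComponent d p) := by
      conv_lhs => rw [← MvPolynomial.sum_homogeneousComponent p]
      rw [map_sum]
      apply Finset.sum_congr rfl
      intro d _
      exact eval_smul_hom (MvPolynomial.homogeneousComponent_isHomogeneous d p) a v
    rw [h2, hPP, Polynomial.eval_finset_sum]
    apply Finset.sum_congr rfl
    intro d _
    rw [Polynomial.eval_mul, Polynomial.eval_C, Polynomial.eval_pow, Polynomial.eval_X, mul_comm]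
  have hPP0 : PP = 0 := by
    apply Polynomial.eq_zero_of_infinite_isRoot
    apply Set.Infinite.mono ?_ ((Set.finite_singleton (0:F)).infinite_compl)
    intro a ha
    simp only [Set.mem_setOf_eq, Polynomial.IsRoot.def]
    rw [← hexp a]
    exact h (a • v) (smul_ne_zero ha hv) (by rw [mk_smul v hv ha]; exact hmk)
  by_cases hdN : dd ≤ N
  · have hco : Polynomial.coeff PP dd
        = MvPolynomial.eval v (MvPolynomial.homogeneousComponent dd p) := by
      rw [hPP, Polynomial.finset_sum_coeff]
      rw [Finset.sum_eq_single dd]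
      · simp
      · intro b _ hbne
        rw [Polynomial.coeff_C_mul, Polynomial.coeff_X_pow, if_neg (by omega)]
        simp
      · intro hdd
        exact absurd (Finset.mem_range.2 (by omega)) hdd
    rw [hPP0] at hco
    simpa using hco.symm
  · rw [MvPolynomial.homogeneousComponent_eq_zero _ p (by omega)]
    simp

lemma isClosed_Z {p : MvPolynomial (Fin (m+1)) F} {d : ℕ} (hp : p.IsHomogeneous d) :
    IsClosed {x : Pt F m | Vanishes F m p x} := by
  rw [← isOpen_compl_iff]
  have : {x : Pt F m | Vanishes F m p x}ᶜ = {x : Pt F m | ¬ Vanishes F m p x} := by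
    ext y; simp
  rw [this]
  exact TopologicalSpace.isOpen_generateFrom_of_mem ⟨p, d, hp, rfl⟩

lemma isClosed_vanishes [Infinite F] (p : MvPolynomial (Fin (m+1)) F) :
    IsClosed {x : Pt F m | Vanishes F m p x} := by
  have hiff : {x : Pt F m | Vanishes F m p x}
      = ⋂ d : ℕ, {x : Pt F m | Vanishes F m (MvPolynomial.homogeneousComponent d p) x} := by
    ext x
    simp only [Set.mem_iInter, Set.mem_setOf_eq]
    constructor
    · intro h d; exact vanishes_components h d
    · intro h v hv hmk
      have : MvPolynomial.eval v p = ∑ d ∈ Finset.range (p.totalDegree + 1),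
          MvPolynomial.eval v (MvPolynomial.homogeneousComponent d p) := by
        conv_lhs => rw [← MvPolynomial.sum_homogeneousComponent p]
        rw [map_sum]
      rw [this]
      apply Finset.sum_eq_zero
      intro d _
      exact h d v hv hmk
  rw [hiff]
  exact isClosed_iInter (fun d => isClosed_Z (MvPolynomial.homogeneousComponent_isHomogeneous d p))

lemma preirr_subset_closed {X : Type*} [TopologicalSpace X] {s A B : Set X}
    (hs : IsPreirreducible s) (hA : IsClosed A) (hB : IsClosed B) (hsub : s ⊆ A ∪ B) :
    s ⊆ A ∨ s ⊆ B := by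
  by_contra hcon
  push_neg at hcon
  obtain ⟨x, hxs, hxA⟩ := Set.not_subset.1 hcon.1
  obtain ⟨y, hys, hyB⟩ := Set.not_subset.1 hcon.2
  obtain ⟨z, hzs, hz1, hz2⟩ := hs Aᶜ Bᶜ hA.isOpen_compl hB.isOpen_compl
    ⟨x, hxs, hxA⟩ ⟨y, hys, hyB⟩
  rcases hsub hzs with h | h
  exacts [hz1 h, hz2 h]

/-- The vanishing ideal of a set of points. -/
def Jideal (C : Set (Pt F m)) : Ideal (MvPolynomial (Fin (m+1)) F) where
  carrier := {p | ∀ x ∈ C, Vanishes F m p x}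
  add_mem' := fun hp hq x hx v hv hmk => by
    rw [map_add, hp x hx v hv hmk, hq x hx v hv hmk, add_zero]
  zero_mem' := fun x hx v hv hmk => map_zero _
  smul_mem' := fun r p hp x hx v hv hmk => by
    rw [smul_eq_mul, map_mul, hp x hx v hv hmk, mul_zero]

lemma mem_Jideal {C : Set (Pt F m)} {p : MvPolynomial (Fin (m+1)) F} :
    p ∈ Jideal C ↔ ∀ x ∈ C, Vanishes F m p x := Iff.rfl

lemma Jideal_antitone {C C' : Set (Pt F m)} (h : C ⊆ C') : Jideal C' ≤ Jideal C :=
  fun _ hp x hx => hp x (h hx)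

lemma Jideal_prime [Infinite F] {C : Set (Pt F m)} (hC : IsIrreducible C) :
    (Jideal C).IsPrime := by
  constructor
  · intro htop
    obtain ⟨x, hx⟩ := hC.1
    have h1 : (1 : MvPolynomial (Fin (m+1)) F) ∈ Jideal C := htop ▸ Submodule.mem_top
    have := h1 x hx x.rep x.rep_nonzero x.mk_rep
    rw [map_one] at this
    exact one_ne_zero this
  · intro p q hpq
    have hsub : C ⊆ {x | Vanishes F m p x} ∪ {x | Vanishes F m q x} := by
      intro x hx
      have hpq' : Phi x.rep (p * q) = 0 := phi_eq_zero_of_vanishes (hpq x hx)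
      rw [map_mul] at hpq'
      rcases mul_eq_zero.1 hpq' with h | h
      · exact Or.inl (vanishes_of_phi_zero h)
      · exact Or.inr (vanishes_of_phi_zero h)
    rcases preirr_subset_closed hC.2 (isClosed_vanishes p) (isClosed_vanishes q) hsub with h | h
    · exact Or.inl (fun x hx => h hx)
    · exact Or.inr (fun x hx => h hx)

lemma exists_separating {C : Set (Pt F m)} (hC : IsClosed C) {x : Pt F m} (hx : x ∉ C) :
    ∃ q, q ∈ Jideal C ∧ ¬ Vanishes F m q x := by
  classical
  have hbasis := TopologicalSpace.isTopologicalBasis_of_subbasis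
    (t := zariskiTopology F m)
    (s := { U | ∃ (p : MvPolynomial (Fin (m + 1)) F) (d : ℕ),
        p.IsHomogeneous d ∧ U = { x | ¬ Vanishes F m p x } }) rfl
  obtain ⟨b, hbmem, hxb, hbsub⟩ := hbasis.exists_subset_of_mem_open
    (show x ∈ Cᶜ from hx) hC.isOpen_compl
  obtain ⟨f, ⟨hfin, hfsub⟩, rfl⟩ := hbmem
  choose pfun dfun hhom hueq using fun (u : Set (Pt F m)) (hu : u ∈ f) => hfsub hu
  refine ⟨∏ u ∈ hfin.toFinset.attach, pfun u.1 (hfin.mem_toFinset.1 u.2), ?_, ?_⟩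
  · intro y hy
    have hyb : y ∉ ⋂₀ f := fun hyb => hbsub hyb hy
    obtain ⟨u, huf, hyu⟩ : ∃ u ∈ f, y ∉ u := by
      by_contra hcc
      push_neg at hcc
      exact hyb (fun u hu => hcc u hu)
    have hvan : Vanishes F m (pfun u huf) y := by
      have h2 := hueq u huf
      rw [h2] at hyu
      simpa using hyu
    have hdvd : pfun u huf ∣ ∏ u ∈ hfin.toFinset.attach, pfun u.1 (hfin.mem_toFinset.1 u.2) := by
      have hmem : (⟨u, hfin.mem_toFinset.2 huf⟩ : {z // z ∈ hfin.toFinset}) ∈ hfin.toFinset.attach :=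
        Finset.mem_attach _ _
      exact Finset.dvd_prod_of_mem _ hmem
    obtain ⟨r, hr⟩ := hdvd
    rw [hr]
    intro v hv hmk
    rw [map_mul, hvan v hv hmk, zero_mul]
  · intro hvq
    have hx0 := hvq x.rep x.rep_nonzero x.mk_rep
    rw [map_prod] at hx0
    obtain ⟨u, hu, h0⟩ := Finset.prod_eq_zero_iff.1 hx0
    have hxu : x ∈ u.1 := Set.mem_sInter.1 hxb u.1 (hfin.mem_toFinset.1 u.2)
    have h2 := hueq u.1 (hfin.mem_toFinset.1 u.2)
    rw [h2] at hxu
    apply hxu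
    intro w hw hmk
    obtain ⟨a, rfl⟩ := exists_unit_rep hw hmk
    rw [eval_smul_hom (hhom u.1 (hfin.mem_toFinset.1 u.2)), h0, mul_zero]

end TDSGeo

namespace TDSGeo

open ProjSat

variable {F : Type} [Field F] {m : ℕ}

lemma Jideal_strict_anti {C C' : Set (Pt F m)} (hC : IsClosed C)
    (hsub : C ⊆ C') (hne : ∃ x ∈ C', x ∉ C) : Jideal C' < Jideal C := by
  obtain ⟨x, hxC', hxC⟩ := hne
  obtain ⟨q, hqJ, hqnv⟩ := exists_separating hC hxC
  refine lt_of_le_of_ne (Jideal_antitone hsub) ?_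
  intro heq
  rw [← heq] at hqJ
  exact hqnv (hqJ x hxC')

lemma chain_bound_Pt [Infinite F]
    (p : LTSeries (TopologicalSpace.IrreducibleCloseds (Pt F m))) :
    p.length ≤ m + 1 := by
  by_contra hlen
  push_neg at hlen
  set g : ℕ → TopologicalSpace.IrreducibleCloseds (Pt F m) :=
    fun i => p ⟨min i (m+2), by omega⟩ with hg
  have hgmono : ∀ i j : ℕ, i < j → j ≤ m + 2 → g i < g j := by
    intro i j hij hj
    apply p.strictMono
    rw [Fin.mk_lt_mk]
    omega
  apply TDSAlg.prime_chain_bound (F := F) (N := m + 1)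
    (fun i => Jideal ((g (m + 2 - i) : Set (Pt F m))))
  · intro i _
    exact Jideal_prime (g (m + 2 - i)).isIrreducible'
  · intro i hi
    have hlt : g (m + 2 - (i+1)) < g (m + 2 - i) := hgmono _ _ (by omega) (by omega)
    have h1 : (g (m + 2 - (i+1)) : Set (Pt F m)) ⊆ (g (m + 2 - i) : Set (Pt F m)) :=
      hlt.le
    have h2 : ∃ x ∈ (g (m + 2 - i) : Set (Pt F m)), x ∉ (g (m + 2 - (i+1)) : Set (Pt F m)) := by
      by_contra hcc
      push_neg at hcc
      exact hlt.ne (le_antisymm hlt.le (fun x hx => hcc x hx))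
    have := Jideal_strict_anti (g (m + 2 - (i+1))).isClosed' h1 h2
    exact this

lemma chain_bound_sub [Infinite F] (S : Set (Pt F m))
    (q : LTSeries (TopologicalSpace.IrreducibleCloseds ↥S)) : q.length ≤ m + 1 := by
  classical
  have hmono : StrictMono (fun T : TopologicalSpace.IrreducibleCloseds ↥S =>
      (⟨closure ((↑) '' (T : Set ↥S)),
        (T.isIrreducible'.image _ continuous_subtype_val.continuousOn).closure,
        isClosed_closure⟩ : TopologicalSpace.IrreducibleCloseds (Pt F m))) := by
    intro T1 T2 h12
    rw [lt_iff_le_not_ge] at h12 ⊢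
    obtain ⟨hle, hnle⟩ := h12
    constructor
    · show closure _ ⊆ closure _
      apply closure_mono
      exact Set.image_mono hle
    · intro hcon
      apply hnle
      -- trace argument
      obtain ⟨A1, hA1closed, hA1⟩ := isClosed_induced_iff.1 T1.isClosed'
      have hA1' : Subtype.val ⁻¹' A1 = (T1 : Set ↥S) := hA1
      have him1 : ((↑) '' (T1 : Set ↥S) : Set (Pt F m)) = S ∩ A1 := by
        rw [← hA1']
        exact Subtype.image_preimage_coe S A1
      have hsub2 : ((↑) '' (T2 : Set ↥S) : Set (Pt F m)) ⊆ S ∩ A1 := by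
        intro y hy
        have hyS : y ∈ S := by
          obtain ⟨c, _, rfl⟩ := hy
          exact c.2
        refine ⟨hyS, ?_⟩
        have : y ∈ closure ((↑) '' (T1 : Set ↥S) : Set (Pt F m)) :=
          hcon (subset_closure hy)
        have hcl : closure ((↑) '' (T1 : Set ↥S) : Set (Pt F m)) ⊆ A1 := by
          apply closure_minimal _ hA1closed
          rw [him1]
          exact Set.inter_subset_right
        exact hcl this
      rw [← him1] at hsub2
      intro z hz
      have := hsub2 ⟨z, hz, rfl⟩
      obtain ⟨c, hc, hcz⟩ := this
      rwa [show c = z from Subtype.val_injective hcz] at hc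
  have hbound := chain_bound_Pt (q.map _ hmono)
  simpa using hbound

lemma dim_lt [Infinite F] {V C D : Set (Pt F m)} (hV : IsIrreducible V) (hD : IsClosed D)
    (hC : C = V ∩ D) (hVD : ¬ V ⊆ D) (hCne : C.Nonempty) : dimv C < dimv V := by
  classical
  obtain ⟨x0, hx0⟩ := hCne
  set P : ℕ → Prop := fun n =>
    ∃ q : LTSeries (TopologicalSpace.IrreducibleCloseds ↥C), q.length = n with hPdef
  have hP0 : P 0 :=
    ⟨RelSeries.singleton _ ⟨closure {(⟨x0, hx0⟩ : ↥C)},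
      isIrreducible_singleton.closure, isClosed_closure⟩, rfl⟩
  have hub : ∀ n, P n → n ≤ m + 1 := by
    rintro n ⟨q, hq⟩
    exact hq ▸ chain_bound_sub C q
  set n₀ := Nat.findGreatest P (m+1) with hn₀
  have hn₀P : P n₀ := Nat.findGreatest_spec (Nat.zero_le _) hP0
  have hmax : ∀ q : LTSeries (TopologicalSpace.IrreducibleCloseds ↥C), q.length ≤ n₀ :=
    fun q => Nat.le_findGreatest (hub _ ⟨q, rfl⟩) ⟨q, rfl⟩
  haveI : Nonempty (TopologicalSpace.IrreducibleCloseds ↥C) :=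
    ⟨⟨closure {(⟨x0, hx0⟩ : ↥C)}, isIrreducible_singleton.closure, isClosed_closure⟩⟩
  have hdimC : dimv C ≤ (n₀ : ℕ) := by
    rw [dimv, topologicalKrullDim, Order.krullDim_eq_iSup_length]
    have hsup : (⨆ (q : LTSeries (TopologicalSpace.IrreducibleCloseds ↥C)), (q.length : ℕ∞))
        ≤ (n₀ : ℕ∞) := iSup_le (fun q => by exact_mod_cast hmax q)
    exact_mod_cast hsup
  -- now build a chain in V of length n₀ + 1
  have hCV : C ⊆ V := hC ▸ Set.inter_subset_left
  obtain ⟨q₀, hq₀⟩ := hn₀P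
  have hinclcl : ∀ T : TopologicalSpace.IrreducibleCloseds ↥C,
      IsClosed (Set.inclusion hCV '' (T : Set ↥C)) ∧
      (Set.inclusion hCV '' (T : Set ↥C)) ⊆ {v : ↥V | (v : Pt F m) ∈ C} := by
    intro T
    obtain ⟨A, hAclosed, hA⟩ := isClosed_induced_iff.1 T.isClosed'
    have hA' : Subtype.val ⁻¹' A = (T : Set ↥C) := hA
    have him : Set.inclusion hCV '' (T : Set ↥C) = ((↑) : ↥V → Pt F m) ⁻¹' (D ∩ A) := by
      ext v
      constructor
      · rintro ⟨c, hc, rfl⟩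
        have hcA : (c : Pt F m) ∈ A := by
          rw [← hA'] at hc
          exact hc
        have h5 : (c : Pt F m) ∈ V ∩ D := by rw [← hC]; exact c.2
        simp only [Set.mem_preimage, Set.coe_inclusion]
        exact ⟨h5.2, hcA⟩
      · rintro ⟨hvD, hvA⟩
        have hvC : (v : Pt F m) ∈ C := by rw [hC]; exact ⟨v.2, hvD⟩
        refine ⟨⟨(v : Pt F m), hvC⟩, ?_, rfl⟩
        rw [← hA']
        exact hvA
    constructor
    · rw [him]
      exact (hD.inter hAclosed).preimage continuous_subtype_val
    · rintro v ⟨c, _, rfl⟩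
      exact c.2
  have hgmono : StrictMono (fun T : TopologicalSpace.IrreducibleCloseds ↥C =>
      (⟨Set.inclusion hCV '' (T : Set ↥C),
        T.isIrreducible'.image _ (continuous_inclusion hCV).continuousOn,
        (hinclcl T).1⟩ : TopologicalSpace.IrreducibleCloseds ↥V)) := by
    intro T1 T2 h12
    rw [lt_iff_le_and_ne] at h12 ⊢
    obtain ⟨hle, hne⟩ := h12
    constructor
    · show Set.inclusion hCV '' _ ⊆ Set.inclusion hCV '' _
      exact Set.image_mono hle
    · intro hcon
      apply hne
      apply SetLike.coe_injective
      have := congrArg (fun T : TopologicalSpace.IrreducibleCloseds ↥V => (T : Set ↥V)) hcon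
      simp only at this
      exact Set.image_injective.2 (Set.inclusion_injective hCV) this
  haveI : IrreducibleSpace ↥V := Subtype.irreducibleSpace hV
  set Vtop : TopologicalSpace.IrreducibleCloseds ↥V :=
    ⟨Set.univ, IrreducibleSpace.isIrreducible_univ ↥V, isClosed_univ⟩ with hVtop
  obtain ⟨xv, hxvV, hxvD⟩ := Set.not_subset.1 hVD
  have hlast : (q₀.map _ hgmono).last < Vtop := by
    rw [lt_iff_le_and_ne]
    constructor
    · intro z _; trivial
    · intro hcon
      have hxvC : (⟨xv, hxvV⟩ : ↥V) ∉ {v : ↥V | (v : Pt F m) ∈ C} := by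
        intro hmem
        rw [hC] at hmem
        exact hxvD hmem.2
      apply hxvC
      have h2 : ((⟨xv, hxvV⟩ : ↥V) : ↥V) ∈ (Vtop : Set ↥V) := by trivial
      rw [← hcon] at h2
      have h3 := (hinclcl (q₀.last)).2
      have h4 : ((q₀.map _ hgmono).last : Set ↥V) =
          Set.inclusion hCV '' ((q₀.last : Set ↥C)) := by
        rw [LTSeries.last_map]
        rfl
      rw [h4] at h2
      exact h3 h2
  set q2 := (q₀.map _ hgmono).snoc Vtop hlast with hq2
  have hq2len : q2.length = n₀ + 1 := by
    rw [hq2]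
    simp [RelSeries.snoc, RelSeries.append, hq₀]
  have hdimV : ((n₀ + 1 : ℕ) : WithBot ℕ∞) ≤ dimv V := by
    have := Order.LTSeries.length_le_krullDim (p := q2)
    rw [hq2len] at this
    exact_mod_cast this
  calc dimv C ≤ ((n₀ : ℕ) : WithBot ℕ∞) := hdimC
    _ < ((n₀ + 1 : ℕ) : WithBot ℕ∞) := by exact_mod_cast Nat.lt_succ_self n₀
    _ ≤ dimv V := hdimV

end TDSGeo

section FinalAssembly

open ProjSat TDS TDS2 TDSGeo Set

lemma preirr_finUnion {X : Type*} [TopologicalSpace X] {s : Set X}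
    (hs : IsPreirreducible s) (hne : s.Nonempty)
    {ι : Type*} (t : Finset ι) (f : ι → Set X) (hcl : ∀ i, IsClosed (f i))
    (hsub : s ⊆ ⋃ i ∈ t, f i) : ∃ i ∈ t, s ⊆ f i := by
  classical
  induction t using Finset.induction_on with
  | empty =>
    obtain ⟨x, hx⟩ := hne
    have := hsub hx
    simp at this
  | insert a t hat ih =>
    rw [Finset.set_biUnion_insert] at hsub
    have hclU : IsClosed (⋃ i ∈ t, f i) :=
      Set.Finite.isClosed_biUnion (t.finite_toSet) (fun i _ => hcl i)
    rcases TDSGeo.preirr_subset_closed hs (hcl a) hclU hsub with h | h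
    · exact ⟨a, Finset.mem_insert_self a t, h⟩
    · obtain ⟨i, hit, hi⟩ := ih h
      exact ⟨i, Finset.mem_insert_of_mem hit, hi⟩

end FinalAssembly

open ProjSat Filter Topology


/-- **Finitely many targets have total density less than one.**
Assume Assumption (†).  Let `V` be a weakly saturated subvariety of `ℙ^m` over a
number field `F`, and let `W₁, …, W_k ⊂ V` be pairwise distinct irreducible locally
closed strongly saturated subvarieties with `dim Wᵢ < dim V`, such that no `Wᵢ` is
contained in the Zariski closure of `W_j` for `i ≠ j`, and such that
`θᵢ = lim N(Wᵢ,B)/N(V,B)` satisfies `0 < θᵢ < 1`.  Then for all pairwise distinct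
indices `i₁, …, i_l` with `l ≥ 2` one has
`lim N(W_{i₁} ∩ ⋯ ∩ W_{i_l},B)/N(V,B) = 0`, and consequently
`∑ θᵢ = lim N(W₁ ∪ ⋯ ∪ W_k,B)/N(V,B) < 1`. -/
theorem targets_density_sum_lt_one
    (F : Type) [Field F] [NumberField F] (m : ℕ)
    (H : Pt F m → ℝ) (hHpos : ∀ x, 0 < H x)
    (hNorthcott : ∀ B : ℝ, {x : Pt F m | H x ≤ B}.Finite)
    (hdagger : Dagger H)
    (V : Set (Pt F m)) (hV : IsLocallyClosed V)
    (hws : WeaklySaturated H V)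
    (k : ℕ) (W : Fin k → Set (Pt F m))
    (hdistinct : Function.Injective W)
    (hWlc : ∀ i, IsLocallyClosed (W i))
    (hWsub : ∀ i, W i ⊆ V)
    (hWirr : ∀ i, IsIrreducible (W i))
    (hWss : ∀ i, StronglySaturated H (W i))
    (hWdim : ∀ i, dimv (W i) < dimv V)
    (hnotcontained : ∀ i j, i ≠ j → ¬ (W i ⊆ closure (W j)))
    (θ : Fin k → ℝ)
    (hθ : ∀ i, Tendsto (ratio H (W i) V) atTop (𝓝 (θ i)))
    (hθ0 : ∀ i, 0 < θ i) (hθ1 : ∀ i, θ i < 1) :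
    (∀ (l : ℕ), 2 ≤ l → ∀ ι : Fin l → Fin k, Function.Injective ι →
        Tendsto (ratio H (⋂ j, W (ι j)) V) atTop (𝓝 0)) ∧
    Tendsto (ratio H (⋃ i, W i) V) atTop (𝓝 (∑ i, θ i)) ∧
    (∑ i, θ i) < 1 := by
  classical
  haveI : Infinite F := inferInstance
  -- Part 1 prerequisites
  have hpair : ∀ i j : Fin k, i ≠ j →
      Tendsto (ratio H (W i ∩ W j) V) atTop (𝓝 0) :=
    fun i j hij => TDS2.pair_zero hNorthcott hWirr hWss hnotcontained hθ hij
  have hpart1 : ∀ (l : ℕ), 2 ≤ l → ∀ ι : Fin l → Fin k, Function.Injective ι →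
      Tendsto (ratio H (⋂ j, W (ι j)) V) atTop (𝓝 0) := by
    intro l hl ι hι
    have h0 : (0:ℕ) < l := by omega
    have h1 : (1:ℕ) < l := by omega
    set i0 : Fin k := ι ⟨0, h0⟩
    set i1 : Fin k := ι ⟨1, h1⟩
    have hne : i0 ≠ i1 := by
      intro h
      have := hι h
      simp [Fin.mk.injEq] at this
    have hsub : (⋂ j, W (ι j)) ⊆ W i0 ∩ W i1 :=
      Set.subset_inter (Set.iInter_subset (fun j => W (ι j)) ⟨0, h0⟩) (Set.iInter_subset (fun j => W (ι j)) ⟨1, h1⟩)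
    apply tendsto_of_tendsto_of_tendsto_of_le_of_le tendsto_const_nhds (hpair i0 i1 hne)
      (fun B => TDS.ratio_nonneg H _ _ B)
    exact fun B => TDS.ratio_mono H hNorthcott hsub V B
  -- Part 2
  have hpart2 : Tendsto (ratio H (⋃ i, W i) V) atTop (𝓝 (∑ i, θ i)) := by
    have := TDS2.union_sum hNorthcott hWirr hWss hnotcontained hθ (Finset.univ : Finset (Fin k))
    have hU : (⋃ i ∈ (Finset.univ : Finset (Fin k)), W i) = ⋃ i, W i := by simp
    rwa [hU] at this
  refine ⟨hpart1, hpart2, ?_⟩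
  -- Part 3
  by_cases hk2 : 2 ≤ k
  · obtain ⟨hVirr, hVinf, hwsat⟩ := hws
    set D : Set (Pt F m) := closure (⋃ i, W i) with hDdef
    have hDclosed : IsClosed D := isClosed_closure
    have hVD : ¬ V ⊆ D := by
      intro hsubV
      have hD2 : D = ⋃ i, closure (W i) := by
        rw [hDdef, closure_iUnion_of_finite]
      have hsubV2 : V ⊆ ⋃ i ∈ (Finset.univ : Finset (Fin k)), closure (W i) := by
        intro x hx
        have := hD2 ▸ hsubV hx
        simpa using this
      obtain ⟨i, -, hi⟩ := preirr_finUnion hVirr.2 hVirr.1 Finset.univ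
        (fun i => closure (W i)) (fun i => isClosed_closure) hsubV2
      have hii : ∃ j : Fin k, j ≠ i := by
        rcases eq_or_ne i ⟨0, by omega⟩ with h | h
        · exact ⟨⟨1, by omega⟩, by rw [h]; intro hcc; simp [Fin.mk.injEq] at hcc⟩
        · exact ⟨⟨0, by omega⟩, fun hcc => h hcc.symm⟩
      obtain ⟨j, hj⟩ := hii
      exact hnotcontained j i hj (fun x hx => hi (hWsub j hx))
    have hCne : (V ∩ D).Nonempty := by
      obtain ⟨x, hx⟩ := (hWirr ⟨0, by omega⟩).1
      exact ⟨x, hWsub _ hx, subset_closure (Set.mem_iUnion.2 ⟨⟨0, by omega⟩, hx⟩)⟩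
    have hdim : dimv (V ∩ D) < dimv V := TDSGeo.dim_lt hVirr hDclosed rfl hVD hCne
    have hlc : IsLocallyClosed (V ∩ D) := hV.inter hDclosed.isLocallyClosed
    obtain ⟨L, hLt, hL1⟩ := hwsat (V ∩ D) hlc Set.inter_subset_left hdim
    have hsub : (⋃ i, W i) ⊆ V ∩ D := by
      intro x hx
      obtain ⟨i, hi⟩ := Set.mem_iUnion.1 hx
      exact ⟨hWsub i hi, subset_closure hx⟩
    have hle : (∑ i, θ i) ≤ L :=
      le_of_tendsto_of_tendsto' hpart2 hLt
        (fun B => TDS.ratio_mono H hNorthcott hsub V B)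
    linarith
  · interval_cases k
    · simpa using one_pos
    · simpa using hθ1 ⟨0, by omega⟩
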